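/- Let d ≥ 1 and J ≥ 1, let x_1, …, x_J ∈ ℝ^d, let μ̂ ∈ ℝ^d and Σ̂ ∈ ℝ^{d×d} symmetric positive definite, and let Θ = {θ ∈ ℝ^d : x_j^⊤θ ≥ 0 for all j ∈ [J]}. For r ≥ 0 define the ellipsoid E_{(μ̂,Σ̂)}(r) = {Σ̂^{1/2} u + μ̂ : u ∈ ℝ^d, ‖u‖₂ ≤ r} and the validity value Validity({x_j}, μ̂, Σ̂) = max{r : r ≥ 0, E_{(μ̂,Σ̂)}(r) ⊆ Θ}. If μ̂ ∈ Θ (and each x_j ≠ 0), then Validity({x_j}, μ̂, Σ̂) = min_{j ∈ [J]} (μ̂^⊤ x_j) / ‖Σ̂^{1/2} x_j‖₂. -/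

import Mathlib

open MeasureTheory Matrix Classical

noncomputable section

/-- Positive semidefinite square root of a matrix (junk value `0` if not PSD). -/
noncomputable def matSqrt {d : ℕ} (A : Matrix (Fin d) (Fin d) ℝ) : Matrix (Fin d) (Fin d) ℝ :=
  if h : A.PosSemidef then
    (h.1.eigenvectorUnitary : Matrix (Fin d) (Fin d) ℝ) * diagonal (Real.sqrt ∘ h.1.eigenvalues) *
      star (h.1.eigenvectorUnitary : Matrix (Fin d) (Fin d) ℝ)
  else 0

/-- Euclidean norm on `Fin d → ℝ`. -/
noncomputable def euclNorm {d : ℕ} (v : Fin d → ℝ) : ℝ := Real.sqrt (∑ i, (v i) ^ 2)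

/-- Set of favorable parameters `Θ({x_j}) = {θ : x_jᵀθ ≥ 0 ∀ j}`. -/
def favSet {d J : ℕ} (x : Fin J → Fin d → ℝ) : Set (Fin d → ℝ) :=
  { θ | ∀ j, 0 ≤ x j ⬝ᵥ θ }

/-- The ellipsoid `E_{(μ̂,Σ̂)}(r) = {Σ̂^{1/2} u + μ̂ : ‖u‖₂ ≤ r}`. -/
def ellipsoid {d : ℕ} (μhat : Fin d → ℝ) (Shat : Matrix (Fin d) (Fin d) ℝ) (r : ℝ) :
    Set (Fin d → ℝ) :=
  { θ | ∃ u : Fin d → ℝ, euclNorm u ≤ r ∧ θ = matSqrt Shat *ᵥ u + μhat }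

/-- The validity value: the largest radius `r ≥ 0` with `E_{(μ̂,Σ̂)}(r) ⊆ Θ({x_j})`. -/
noncomputable def validityVal {d J : ℕ} (x : Fin J → Fin d → ℝ) (μhat : Fin d → ℝ)
    (Shat : Matrix (Fin d) (Fin d) ℝ) : ℝ :=
  sSup { r : ℝ | 0 ≤ r ∧ ellipsoid μhat Shat r ⊆ favSet x }

namespace ValidityAux

variable {d : ℕ}

lemma euclNorm_nonneg (v : Fin d → ℝ) : 0 ≤ euclNorm v := Real.sqrt_nonneg _

lemma sq_euclNorm (v : Fin d → ℝ) : euclNorm v ^ 2 = ∑ i, v i ^ 2 :=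
  Real.sq_sqrt (Finset.sum_nonneg fun _ _ => sq_nonneg _)

lemma dot_self_eq (v : Fin d → ℝ) : v ⬝ᵥ v = euclNorm v ^ 2 := by
  rw [sq_euclNorm]; simp [dotProduct, sq]

lemma euclNorm_smul (c : ℝ) (v : Fin d → ℝ) : euclNorm (c • v) = |c| * euclNorm v := by
  unfold euclNorm
  rw [← Real.sqrt_sq_eq_abs, ← Real.sqrt_mul (sq_nonneg c), Finset.mul_sum]
  congr 1
  refine Finset.sum_congr rfl fun i _ => ?_
  simp [mul_pow]

lemma euclNorm_pos {v : Fin d → ℝ} (hv : v ≠ 0) : 0 < euclNorm v := by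
  rw [euclNorm, Real.sqrt_pos]
  obtain ⟨i, hi⟩ := Function.ne_iff.mp hv
  exact Finset.sum_pos' (fun i _ => sq_nonneg _)
    ⟨i, Finset.mem_univ i, lt_of_le_of_ne (sq_nonneg _) (Ne.symm (pow_ne_zero 2 hi))⟩

lemma abs_dot_le (v u : Fin d → ℝ) : |v ⬝ᵥ u| ≤ euclNorm v * euclNorm u := by
  unfold euclNorm
  rw [← Real.sqrt_sq_eq_abs, ← Real.sqrt_mul (Finset.sum_nonneg fun _ _ => sq_nonneg _)]
  exact Real.sqrt_le_sqrt (Finset.sum_mul_sq_le_sq_mul_sq _ _ _)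

lemma neg_le_dot (v u : Fin d → ℝ) : -(euclNorm v * euclNorm u) ≤ v ⬝ᵥ u :=
  (abs_le.mp (abs_dot_le v u)).1

end ValidityAux

open ValidityAux in
/-- **Lemma 1 (Validity value).** If `μ̂ ∈ Θ({x_j})` (and each `x_j ≠ 0`), then the
validity value equals `min_j μ̂ᵀx_j / ‖Σ̂^{1/2} x_j‖₂`. -/
theorem validity_value {d J : ℕ} (hd : 1 ≤ d) (hJ : 1 ≤ J) (x : Fin J → Fin d → ℝ)
    (hx : ∀ j, x j ≠ 0) (μhat : Fin d → ℝ) (Shat : Matrix (Fin d) (Fin d) ℝ)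
    (hShat : Shat.PosDef) (hμ : μhat ∈ favSet x) :
    validityVal x μhat Shat = ⨅ j, (μhat ⬝ᵥ x j) / euclNorm (matSqrt Shat *ᵥ x j) := by
  haveI : Nonempty (Fin J) := ⟨⟨0, hJ⟩⟩
  set S := matSqrt Shat with hSdef
  have hPSD : Shat.PosSemidef := hShat.posSemidef
  have hSeq : S = (hPSD.1.eigenvectorUnitary : Matrix (Fin d) (Fin d) ℝ) *
      diagonal (Real.sqrt ∘ hPSD.1.eigenvalues) *
      star (hPSD.1.eigenvectorUnitary : Matrix (Fin d) (Fin d) ℝ) := by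
    rw [hSdef, matSqrt, dif_pos hPSD]
  have hSS : S * S = Shat := by
    rw [hSeq]
    have hU : star (hPSD.1.eigenvectorUnitary : Matrix (Fin d) (Fin d) ℝ) *
        (hPSD.1.eigenvectorUnitary : Matrix (Fin d) (Fin d) ℝ) = 1 :=
      Matrix.mem_unitaryGroup_iff'.mp hPSD.1.eigenvectorUnitary.2
    have hD : diagonal (Real.sqrt ∘ hPSD.1.eigenvalues) * diagonal (Real.sqrt ∘ hPSD.1.eigenvalues)
        = diagonal hPSD.1.eigenvalues := by
      rw [diagonal_mul_diagonal]
      congr 1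
      funext i
      exact Real.mul_self_sqrt (hPSD.eigenvalues_nonneg i)
    calc _ = (hPSD.1.eigenvectorUnitary : Matrix (Fin d) (Fin d) ℝ) *
          diagonal (Real.sqrt ∘ hPSD.1.eigenvalues) *
          (star (hPSD.1.eigenvectorUnitary : Matrix (Fin d) (Fin d) ℝ) *
            (hPSD.1.eigenvectorUnitary : Matrix (Fin d) (Fin d) ℝ)) *
          diagonal (Real.sqrt ∘ hPSD.1.eigenvalues) *
          star (hPSD.1.eigenvectorUnitary : Matrix (Fin d) (Fin d) ℝ) := by
          simp only [mul_assoc]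
      _ = (hPSD.1.eigenvectorUnitary : Matrix (Fin d) (Fin d) ℝ) *
          diagonal hPSD.1.eigenvalues *
          star (hPSD.1.eigenvectorUnitary : Matrix (Fin d) (Fin d) ℝ) := by
          rw [hU, mul_one, mul_assoc _ (diagonal _) (diagonal _), hD]
      _ = Shat := by
          conv_rhs => rw [hPSD.1.spectral_theorem, Unitary.conjStarAlgAut_apply]
          rfl
  have hSsym : Sᵀ = S := by
    rw [hSeq]
    simp [Matrix.star_eq_conjTranspose, conjTranspose_eq_transpose_of_trivial, transpose_mul,
      mul_assoc]
  have key : ∀ (v u : Fin d → ℝ), v ⬝ᵥ (S *ᵥ u) = (S *ᵥ v) ⬝ᵥ u := by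
    intro v u
    rw [dotProduct_mulVec, ← hSsym, mulVec_transpose, hSsym]
  have hNe : ∀ j, S *ᵥ x j ≠ 0 := by
    intro j h
    have h2 : Shat *ᵥ x j = 0 := by
      rw [← hSS, ← mulVec_mulVec, h, mulVec_zero]
    have := hShat.dotProduct_mulVec_pos (hx j)
    rw [h2] at this
    simp at this
  set N : Fin J → ℝ := fun j => euclNorm (S *ᵥ x j) with hN
  have hNpos : ∀ j, 0 < N j := fun j => euclNorm_pos (hNe j)
  set m : ℝ := ⨅ j, (μhat ⬝ᵥ x j) / N j with hm
  have hbdd : BddBelow (Set.range fun j => (μhat ⬝ᵥ x j) / N j) :=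
    Set.Finite.bddBelow (Set.finite_range _)
  have hm_le : ∀ j, m ≤ (μhat ⬝ᵥ x j) / N j := fun j => ciInf_le hbdd j
  have hm_nonneg : 0 ≤ m := le_ciInf fun j =>
    div_nonneg (by rw [dotProduct_comm]; exact hμ j) (hNpos j).le
  have hset : { r : ℝ | 0 ≤ r ∧ ellipsoid μhat Shat r ⊆ favSet x } = Set.Icc 0 m := by
    ext r
    simp only [Set.mem_setOf_eq, Set.mem_Icc]
    constructor
    · rintro ⟨hr0, hsub⟩
      refine ⟨hr0, le_ciInf fun j => ?_⟩
      set c : ℝ := r / N j with hc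
      have hc0 : 0 ≤ c := div_nonneg hr0 (hNpos j).le
      set u : Fin d → ℝ := (-c) • (S *ᵥ x j) with hu
      have hun : euclNorm u = r := by
        have hNj : euclNorm (S *ᵥ x j) = N j := rfl
        rw [hu, euclNorm_smul, abs_neg, abs_of_nonneg hc0, hNj, hc,
          div_mul_cancel₀ _ (hNpos j).ne']
      have hmem : S *ᵥ u + μhat ∈ ellipsoid μhat Shat r := ⟨u, hun.le, rfl⟩
      have h0 := hsub hmem j
      have hdot : x j ⬝ᵥ (S *ᵥ u + μhat) = -(r * N j) + x j ⬝ᵥ μhat := by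
        rw [dotProduct_add, key, hu, dotProduct_smul]
        have hNj : euclNorm (S *ᵥ x j) = N j := rfl
        rw [smul_eq_mul, dot_self_eq, hNj, hc]
        field_simp [(hNpos j).ne']
      rw [hdot] at h0
      rw [le_div_iff₀ (hNpos j)]
      rw [dotProduct_comm]
      linarith
    · rintro ⟨hr0, hrm⟩
      refine ⟨hr0, ?_⟩
      rintro θ ⟨u, hu, rfl⟩ j
      rw [dotProduct_add, key]
      have h1 : -(N j * euclNorm u) ≤ (S *ᵥ x j) ⬝ᵥ u := neg_le_dot _ u
      have h2 : N j * euclNorm u ≤ N j * r := by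
        exact mul_le_mul_of_nonneg_left hu (hNpos j).le
      have h3 : r * N j ≤ μhat ⬝ᵥ x j := by
        rw [← le_div_iff₀ (hNpos j)]
        exact hrm.trans (hm_le j)
      rw [dotProduct_comm (x j) μhat] at *
      nlinarith [hNpos j, euclNorm_nonneg u]
  rw [validityVal, hset, csSup_Icc hm_nonneg]

end
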